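/- Let r ≥ 1, let F be a linearly ordered field, and let k : {0,1,…,r,r+1} × ℤ → F satisfy k(0,m) = k(r+1,m) = 0, k(i,m) > 0 for all i ∈ {1,…,r}, m ∈ ℤ, and the Y-diamond rule k(i,m)·k(i,m+1) = (1 + k(i+1,m))·(1 + k(i-1,m+1)) for all i ∈ {1,…,r}, m ∈ ℤ. Then k satisfies the glide symmetry k(i,m) = k(r+1-i, m+i+1) for all i ∈ {1,…,r} and m ∈ ℤ. -/

import Mathlib

namespace YfriezeAux

variable {F : Type*} [Field F] [LinearOrder F] [IsStrictOrderedRing F]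

def dd (a b : F × F) : F := a.1 * b.2 - a.2 * b.1

lemma dd_plucker (a b c d : F × F) :
    dd a b * dd c d - dd a c * dd b d + dd a d * dd b c = 0 := by
  simp only [dd]; ring

def vseq (κ : ℕ → F) : ℕ → F × F
  | 0 => (1, 0)
  | 1 => (0, 1)
  | 2 => (-1, 1)
  | (n+3) =>
      (κ n * dd (vseq κ n) (vseq κ (n+1)) * (vseq κ (n+2)).1
        - dd (vseq κ (n+1)) (vseq κ (n+2)) * (vseq κ n).1,
       κ n * dd (vseq κ n) (vseq κ (n+1)) * (vseq κ (n+2)).2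
        - dd (vseq κ (n+1)) (vseq κ (n+2)) * (vseq κ n).2)

def Bb (κ : ℕ → F) (a c : ℕ) : F := dd (vseq κ a) (vseq κ c)

lemma Bb_plucker (κ : ℕ → F) (a c e g : ℕ) :
    Bb κ a c * Bb κ e g - Bb κ a e * Bb κ c g + Bb κ a g * Bb κ c e = 0 :=
  dd_plucker _ _ _ _

lemma Bb_self (κ : ℕ → F) (a : ℕ) : Bb κ a a = 0 := by simp only [Bb, dd]; ring

lemma Bb_anti (κ : ℕ → F) (a c : ℕ) : Bb κ a c = - Bb κ c a := by
  simp only [Bb, dd]; ring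

lemma Bb_rec (κ : ℕ → F) (a n : ℕ) :
    Bb κ a (n+3) = κ n * Bb κ n (n+1) * Bb κ a (n+2) - Bb κ (n+1) (n+2) * Bb κ a n := by
  simp only [Bb, dd, vseq]; ring

lemma Bb_row3 (κ : ℕ → F) (m : ℕ) :
    Bb κ m (m+3) = κ m * Bb κ m (m+1) * Bb κ m (m+2) := by
  have h := Bb_rec κ m m
  rw [Bb_self κ m] at h
  linear_combination h

lemma Bb_step3 (κ : ℕ → F) (m : ℕ) :
    Bb κ (m+2) (m+3) = Bb κ (m+1) (m+2) * Bb κ m (m+2) := by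
  have h := Bb_rec κ (m+2) m
  rw [Bb_self κ (m+2), Bb_anti κ (m+2) m] at h
  linear_combination h

lemma Bb_pos (κ : ℕ → F) (hκ : ∀ n, 0 < κ n) (n : ℕ) :
    (0 < Bb κ n (n+1)) ∧ (0 < Bb κ n (n+2)) := by
  have key : ∀ n : ℕ, ((0 < Bb κ n (n+1)) ∧ (0 < Bb κ n (n+2))) ∧
      ((0 < Bb κ (n+1) (n+2)) ∧ (0 < Bb κ (n+1) (n+3))) := by
    intro n
    induction n with
    | zero =>
      have h01 : Bb κ 0 1 = 1 := by norm_num [Bb, dd, vseq]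
      have h02 : Bb κ 0 2 = 1 := by norm_num [Bb, dd, vseq]
      have h12 : Bb κ 1 2 = 1 := by norm_num [Bb, dd, vseq]
      have h13 : Bb κ 1 3 = κ 0 + 1 := by
        have h := Bb_rec κ 1 0
        norm_num at h
        rw [h01, h12, Bb_anti κ 1 0, h01] at h
        linear_combination h
      refine ⟨⟨by rw [h01]; norm_num, by rw [h02]; norm_num⟩,
        by rw [h12]; norm_num, by rw [h13]; linarith [hκ 0]⟩
    | succ n ih =>
      obtain ⟨⟨h1, h2⟩, h3, h4⟩ := ih
      have h23 : Bb κ (n+2) (n+3) = Bb κ (n+1) (n+2) * Bb κ n (n+2) := Bb_step3 κ n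
      have p23 : 0 < Bb κ (n+2) (n+3) := by rw [h23]; exact mul_pos h3 h2
      have h24 : Bb κ (n+2) (n+4) = κ (n+1) * Bb κ (n+1) (n+2) * Bb κ (n+2) (n+3)
          + Bb κ (n+2) (n+3) * Bb κ (n+1) (n+2) := by
        have h := Bb_rec κ (n+2) (n+1)
        rw [Bb_anti κ (n+2) (n+1)] at h
        have e1 : n+1+3 = n+4 := by omega
        have e2 : n+1+1 = n+2 := by omega
        have e3 : n+1+2 = n+3 := by omega
        rw [e1, e2, e3] at h
        linear_combination h
      have p24 : 0 < Bb κ (n+2) (n+4) := by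
        rw [h24]
        have := mul_pos (mul_pos (hκ (n+1)) h3) p23
        have := mul_pos p23 h3
        nlinarith
      exact ⟨⟨h3, h4⟩, p23, p24⟩
  exact (key n).1

/-- the inductive step: diamond + formulas at `i-1, i` give the formula at `i+1`. -/
lemma step_formula (b : ℕ → ℕ → F)
    (pl : ∀ a c e g : ℕ, b a c * b e g - b a e * b c g + b a g * b c e = 0)
    (K ki ki' ki'' : F) (i m : ℕ)
    (hd : ki * ki' = (1 + K) * (1 + ki''))
    (F1 : ki * b m (m+1) * b (m+i+1) (m+i+2) = b m (m+i+2) * b (m+1) (m+i+1))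
    (F2 : ki' * b (m+1) (m+2) * b (m+i+2) (m+i+3) = b (m+1) (m+i+3) * b (m+2) (m+i+2))
    (F3 : ki'' * b (m+1) (m+2) * b (m+i+1) (m+i+2) = b (m+1) (m+i+2) * b (m+2) (m+i+1))
    (pb : 0 < b (m+1) (m+2)) (pc : 0 < b (m+i+1) (m+i+2))
    (ps : 0 < b (m+1) (m+i+1)) (pw : 0 < b (m+2) (m+i+2)) :
    K * b m (m+1) * b (m+i+2) (m+i+3) = b m (m+i+3) * b (m+1) (m+i+2) := by
  have P1 := pl (m+1) (m+2) (m+i+1) (m+i+2)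
  have P2 := pl m (m+1) (m+i+2) (m+i+3)
  have h1 : (1 + ki'') * (b (m+1) (m+2) * b (m+i+1) (m+i+2))
      = b (m+1) (m+i+1) * b (m+2) (m+i+2) := by linear_combination F3 + P1
  have hE : ((1 + K) * (b m (m+1) * b (m+i+2) (m+i+3)))
        * (b (m+1) (m+i+1) * b (m+2) (m+i+2) * (b (m+1) (m+2) * b (m+i+1) (m+i+2)))
      = (b m (m+i+2) * b (m+1) (m+i+3))
        * (b (m+1) (m+i+1) * b (m+2) (m+i+2) * (b (m+1) (m+2) * b (m+i+1) (m+i+2))) := by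
    linear_combination
      (-((1+K) * b m (m+1) * b (m+i+2) (m+i+3) * b (m+1) (m+2) * b (m+i+1) (m+i+2))) * h1
      + (-(b m (m+1) * b (m+i+2) (m+i+3) * (b (m+1) (m+2))^2 * (b (m+i+1) (m+i+2))^2)) * hd
      + (ki' * b (m+1) (m+2) * b (m+i+2) (m+i+3) * b (m+1) (m+2) * b (m+i+1) (m+i+2)) * F1
      + (b m (m+i+2) * b (m+1) (m+i+1) * b (m+1) (m+2) * b (m+i+1) (m+i+2)) * F2
  have hM : (0:F) < b (m+1) (m+i+1) * b (m+2) (m+i+2) * (b (m+1) (m+2) * b (m+i+1) (m+i+2)) :=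
    mul_pos (mul_pos ps pw) (mul_pos pb pc)
  have hE' : (1 + K) * (b m (m+1) * b (m+i+2) (m+i+3)) = b m (m+i+2) * b (m+1) (m+i+3) :=
    mul_right_cancel₀ hM.ne' hE
  linear_combination hE' - P2

end YfriezeAux

namespace Master
open YfriezeAux

variable {F : Type*} [Field F] [LinearOrder F] [IsStrictOrderedRing F]

lemma master (r : ℕ) (hr : 1 ≤ r) (k : ℕ → ℕ → F)
    (hk0 : ∀ m, k 0 m = 0) (hkr : ∀ m, k (r + 1) m = 0)
    (hkpos : ∀ i m, 1 ≤ i → i ≤ r → 0 < k i m)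
    (hdia : ∀ i m, 1 ≤ i → i ≤ r →
      k i m * k i (m + 1) = (1 + k (i + 1) m) * (1 + k (i - 1) (m + 1))) :
    ∀ i, 1 ≤ i → i ≤ r → k i 0 = k (r + 1 - i) (i + 1) := by
  set κ : ℕ → F := fun n => k 1 n with hκdef
  have hκ : ∀ n, 0 < κ n := fun n => hkpos 1 n le_rfl hr
  have p1 : ∀ m : ℕ, 0 < Bb κ m (m+1) := fun m => (Bb_pos κ hκ m).1
  have p2 : ∀ m : ℕ, 0 < Bb κ m (m+2) := fun m => (Bb_pos κ hκ m).2
  have Frow1 : ∀ m : ℕ, k 1 m * Bb κ m (m+1) * Bb κ (m+2) (m+3)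
      = Bb κ m (m+3) * Bb κ (m+1) (m+2) := by
    intro m
    have h3 := Bb_row3 κ m
    have h4 := Bb_step3 κ m
    have hκm : κ m = k 1 m := rfl
    rw [hκm] at h3
    linear_combination (k 1 m * Bb κ m (m+1)) * h4 - (Bb κ (m+1) (m+2)) * h3
  have main : ∀ i, i ≤ r →
      (∀ m, k i m * Bb κ m (m+1) * Bb κ (m+i+1) (m+i+2)
        = Bb κ m (m+i+2) * Bb κ (m+1) (m+i+1))
      ∧ (∀ m, 0 < Bb κ m (m+i+2)) := by
    intro i
    induction i using Nat.strong_induction_on with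
    | _ i ih =>
      intro hir
      rcases i with _ | _ | j
      · constructor
        · intro m
          have z : Bb κ (m+1) (m+0+1) = 0 := by
            rw [show m+0+1 = m+1 from by omega]; exact Bb_self κ (m+1)
          rw [hk0 m, z]; ring
        · intro m
          rw [show m+0+2 = m+2 from by omega]; exact p2 m
      · constructor
        · intro m
          have h := Frow1 m
          rw [show m+2 = m+1+1 from rfl, show m+3 = m+1+2 from rfl] at h
          exact h
        · intro m
          rw [show m+1+2 = m+3 from by omega, Bb_row3 κ m]
          exact mul_pos (mul_pos (hκ m) (p1 m)) (p2 m)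
      · -- i = j+2
        have hir' : j + 2 ≤ r := by omega
        have ihj := ih j (by omega) (by omega)
        have ihj1 := ih (j+1) (by omega) (by omega)
        have gap : ∀ g m : ℕ, 1 ≤ g → g ≤ j+3 → 0 < Bb κ m (m+g) := by
          intro g m hg1 hg2
          rcases g with _ | _ | _ | gg
          · omega
          · exact p1 m
          · exact p2 m
          · have h := (ih (gg+1) (by omega) (by omega)).2 m
            rw [show m+(gg+1)+2 = m+(gg+3) from by omega] at h
            exact h
        have FmJ : ∀ m, k (j+2) m * Bb κ m (m+1) * Bb κ (m+(j+2)+1) (m+(j+2)+2)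
            = Bb κ m (m+(j+2)+2) * Bb κ (m+1) (m+(j+2)+1) := by
          intro m
          have F1 := ihj1.1 m
          have F2 : k (j+1) (m+1) * Bb κ (m+1) (m+2) * Bb κ (m+(j+1)+2) (m+(j+1)+3)
              = Bb κ (m+1) (m+(j+1)+3) * Bb κ (m+2) (m+(j+1)+2) := by
            have h := ihj1.1 (m+1)
            rw [show m+1+(j+1)+1 = m+(j+1)+2 from by omega,
              show m+1+(j+1)+2 = m+(j+1)+3 from by omega,
              show m+1+1 = m+2 from rfl] at h
            exact h
          have F3 : k j (m+1) * Bb κ (m+1) (m+2) * Bb κ (m+(j+1)+1) (m+(j+1)+2)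
              = Bb κ (m+1) (m+(j+1)+2) * Bb κ (m+2) (m+(j+1)+1) := by
            have h := ihj.1 (m+1)
            rw [show m+1+j+1 = m+(j+1)+1 from by omega,
              show m+1+j+2 = m+(j+1)+2 from by omega,
              show m+1+1 = m+2 from rfl] at h
            exact h
          have hd := hdia (j+1) m (by omega) (by omega)
          rw [show j+1+1 = j+2 from rfl, show j+1-1 = j from rfl] at hd
          have pc : 0 < Bb κ (m+(j+1)+1) (m+(j+1)+2) := by
            have h := p1 (m+(j+1)+1)
            rw [show m+(j+1)+1+1 = m+(j+1)+2 from rfl] at h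
            exact h
          have ps : 0 < Bb κ (m+1) (m+(j+1)+1) := by
            have h := gap (j+1) (m+1) (by omega) (by omega)
            rw [show m+1+(j+1) = m+(j+1)+1 from by omega] at h
            exact h
          have pw : 0 < Bb κ (m+2) (m+(j+1)+2) := by
            have h := gap (j+1) (m+2) (by omega) (by omega)
            rw [show m+2+(j+1) = m+(j+1)+2 from by omega] at h
            exact h
          have S := step_formula (Bb κ) (Bb_plucker κ) (k (j+2) m) (k (j+1) m)
            (k (j+1) (m+1)) (k j (m+1)) (j+1) m hd F1 F2 F3 (p1 (m+1)) pc ps pw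
          rw [show m+(j+2)+1 = m+(j+1)+2 from by omega,
            show m+(j+2)+2 = m+(j+1)+3 from by omega]
          exact S
        refine ⟨FmJ, ?_⟩
        intro m
        have hF := FmJ m
        have hK : 0 < k (j+2) m := hkpos (j+2) m (by omega) hir'
        have pt : 0 < Bb κ (m+1) (m+(j+2)+1) := by
          have h := gap (j+2) (m+1) (by omega) (by omega)
          rw [show m+1+(j+2) = m+(j+2)+1 from by omega] at h
          exact h
        have pd : 0 < Bb κ (m+(j+2)+1) (m+(j+2)+2) := by
          have h := p1 (m+(j+2)+1)
          rw [show m+(j+2)+1+1 = m+(j+2)+2 from rfl] at h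
          exact h
        have hgt : 0 < Bb κ m (m+(j+2)+2) * Bb κ (m+1) (m+(j+2)+1) := by
          rw [← hF]
          exact mul_pos (mul_pos hK (p1 m)) pd
        nlinarith [hgt, pt]

  have gapAll : ∀ g m : ℕ, 1 ≤ g → g ≤ r+2 → 0 < Bb κ m (m+g) := by
    intro g m hg1 hg2
    rcases g with _ | _ | _ | gg
    · omega
    · exact p1 m
    · exact p2 m
    · have h := (main (gg+1) (by omega)).2 m
      rw [show m+(gg+1)+2 = m+(gg+3) from by omega] at h
      exact h
  have Fr1 : ∀ m : ℕ, k (r+1) m * Bb κ m (m+1) * Bb κ (m+r+2) (m+r+3)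
      = Bb κ m (m+r+3) * Bb κ (m+1) (m+r+2) := by
    intro m
    have F1 : k r m * Bb κ m (m+1) * Bb κ (m+r+1) (m+r+2)
        = Bb κ m (m+r+2) * Bb κ (m+1) (m+r+1) := (main r le_rfl).1 m
    have F2 : k r (m+1) * Bb κ (m+1) (m+2) * Bb κ (m+r+2) (m+r+3)
        = Bb κ (m+1) (m+r+3) * Bb κ (m+2) (m+r+2) := by
      have h := (main r le_rfl).1 (m+1)
      rw [show m+1+r+1 = m+r+2 from by omega, show m+1+r+2 = m+r+3 from by omega,
        show m+1+1 = m+2 from rfl] at h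
      exact h
    have F3 : k (r-1) (m+1) * Bb κ (m+1) (m+2) * Bb κ (m+r+1) (m+r+2)
        = Bb κ (m+1) (m+r+2) * Bb κ (m+2) (m+r+1) := by
      have h := (main (r-1) (by omega)).1 (m+1)
      rw [show m+1+(r-1)+1 = m+r+1 from by omega, show m+1+(r-1)+2 = m+r+2 from by omega,
        show m+1+1 = m+2 from rfl] at h
      exact h
    have hd := hdia r m hr le_rfl
    have pc : 0 < Bb κ (m+r+1) (m+r+2) := by
      have h := p1 (m+r+1)
      rw [show m+r+1+1 = m+r+2 from rfl] at h
      exact h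
    have ps : 0 < Bb κ (m+1) (m+r+1) := by
      have h := gapAll r (m+1) hr (by omega)
      rw [show m+1+r = m+r+1 from by omega] at h
      exact h
    have pw : 0 < Bb κ (m+2) (m+r+2) := by
      have h := gapAll r (m+2) hr (by omega)
      rw [show m+2+r = m+r+2 from by omega] at h
      exact h
    have S := step_formula (Bb κ) (Bb_plucker κ) (k (r+1) m) (k r m)
      (k r (m+1)) (k (r-1) (m+1)) r m hd F1 F2 F3 (p1 (m+1)) pc ps pw
    exact S
  have Z : ∀ m : ℕ, Bb κ m (m+r+3) = 0 := by
    intro m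
    have h := Fr1 m
    rw [hkr m] at h
    have h2 : Bb κ m (m+r+3) * Bb κ (m+1) (m+r+2) = 0 := by linear_combination -h
    have hp : 0 < Bb κ (m+1) (m+r+2) := by
      have hh := gapAll (r+1) (m+1) (by omega) (by omega)
      rw [show m+1+(r+1) = m+r+2 from by omega] at hh
      exact hh
    exact (mul_eq_zero.mp h2).resolve_right hp.ne'
  have Deg : ∀ m n : ℕ, Bb κ m (m+1) * Bb κ n (m+r+3)
      = Bb κ m n * Bb κ (m+1) (m+r+3) := by
    intro m n
    have P := Bb_plucker κ m (m+1) n (m+r+3)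
    have z := Z m
    linear_combination P - Bb κ (m+1) n * z
  intro i hi1 hi2
  have e0 : k i 0 * Bb κ 0 1 * Bb κ (i+1) (i+2) = Bb κ 0 (i+2) * Bb κ 1 (i+1) := by
    have h := (main i hi2).1 0
    rw [show 0+i+1 = i+1 from by omega, show 0+i+2 = i+2 from by omega,
      show (0:ℕ)+1 = 1 from rfl] at h
    exact h
  have e1 : k (r+1-i) (i+1) * Bb κ (i+1) (i+2) * Bb κ (r+3) (r+4)
      = Bb κ (i+1) (r+4) * Bb κ (i+2) (r+3) := by
    have h := (main (r+1-i) (by omega)).1 (i+1)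
    rw [show i+1+(r+1-i)+1 = r+3 from by omega, show i+1+(r+1-i)+2 = r+4 from by omega,
      show i+1+1 = i+2 from rfl] at h
    exact h
  have d1 : Bb κ 0 1 * Bb κ (i+2) (r+3) = Bb κ 0 (i+2) * Bb κ 1 (r+3) := by
    have h := Deg 0 (i+2)
    rw [show (0:ℕ)+1 = 1 from rfl, show (0:ℕ)+r+3 = r+3 from by omega] at h
    exact h
  have d2 : Bb κ 1 2 * Bb κ (i+1) (r+4) = Bb κ 1 (i+1) * Bb κ 2 (r+4) := by
    have h := Deg 1 (i+1)
    rw [show (1:ℕ)+1 = 2 from rfl, show (1:ℕ)+r+3 = r+4 from by omega] at h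
    exact h
  have d3 : Bb κ 1 2 * Bb κ (r+3) (r+4) = Bb κ 1 (r+3) * Bb κ 2 (r+4) := by
    have h := Deg 1 (r+3)
    rw [show (1:ℕ)+1 = 2 from rfl, show (1:ℕ)+r+3 = r+4 from by omega] at h
    exact h
  have pA : 0 < Bb κ 0 1 := p1 0
  have p12 : 0 < Bb κ 1 2 := p1 1
  have pB : 0 < Bb κ (i+1) (i+2) := p1 (i+1)
  have pG : 0 < Bb κ 1 (r+3) := by
    have h := gapAll (r+2) 1 (by omega) le_rfl
    rw [show (1:ℕ)+(r+2) = r+3 from by omega] at h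
    exact h
  have pH : 0 < Bb κ 2 (r+4) := by
    have h := gapAll (r+2) 2 (by omega) le_rfl
    rw [show (2:ℕ)+(r+2) = r+4 from by omega] at h
    exact h
  have key : k i 0 * (Bb κ 0 1 * Bb κ (i+1) (i+2) * Bb κ 1 (r+3) * Bb κ 2 (r+4) * Bb κ 1 2)
      = k (r+1-i) (i+1) * (Bb κ 0 1 * Bb κ (i+1) (i+2) * Bb κ 1 (r+3) * Bb κ 2 (r+4) * Bb κ 1 2) := by
    linear_combination (Bb κ 1 (r+3) * Bb κ 2 (r+4) * Bb κ 1 2) * e0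
      - (Bb κ 0 1 * (Bb κ 1 2)^2) * e1
      + (k (r+1-i) (i+1) * Bb κ 0 1 * Bb κ (i+1) (i+2) * Bb κ 1 2) * d3
      - (Bb κ 1 2 * Bb κ 1 (i+1) * Bb κ 2 (r+4)) * d1
      - (Bb κ 1 2 * Bb κ 0 1 * Bb κ (i+2) (r+3)) * d2
  have hX : (0:F) < Bb κ 0 1 * Bb κ (i+1) (i+2) * Bb κ 1 (r+3) * Bb κ 2 (r+4) * Bb κ 1 2 :=
    mul_pos (mul_pos (mul_pos (mul_pos pA pB) pG) pH) p12
  exact mul_left_cancel₀ hX.ne' (by linear_combination key)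

end Master

/-- Glide symmetry of positive Y-frieze patterns of width `r`. -/
theorem Yfrieze_glide_symmetry (r : ℕ) (hr : 1 ≤ r) {F : Type*} [Field F] [LinearOrder F] [IsStrictOrderedRing F]
    (k : ℕ → ℤ → F)
    (hk0 : ∀ m, k 0 m = 0) (hkr : ∀ m, k (r + 1) m = 0)
    (hkpos : ∀ i m, 1 ≤ i → i ≤ r → 0 < k i m)
    (hdiamond : ∀ i m, 1 ≤ i → i ≤ r →
      k i m * k i (m + 1) = (1 + k (i + 1) m) * (1 + k (i - 1) (m + 1))) :
    ∀ i m, 1 ≤ i → i ≤ r → k i m = k (r + 1 - i) (m + i + 1) := by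
  intro i m hi1 hi2
  have H := Master.master r hr (fun j n => k j (m + n))
    (fun n => hk0 (m + n)) (fun n => hkr (m + n))
    (fun j n h1 h2 => hkpos j (m + n) h1 h2)
    (fun j n h1 h2 => by
      have e : (m + ((n : ℤ) + 1)) = (m + n) + 1 := by ring
      simp only [Nat.cast_add, Nat.cast_one]
      rw [e]
      exact hdiamond j (m + n) h1 h2)
    i hi1 hi2
  simp only [Nat.cast_add, Nat.cast_one, Nat.cast_zero, add_zero] at H
  rw [show (m + ((i : ℤ) + 1)) = m + i + 1 from by ring] at H
  exact H
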